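/- Let n ≥ 3 and let A be a primitive (0,1) companion matrix of order n with zero trace. Let V_2 = {i : a_{n,i} = 1} and V_1 = {i : a_{n,i} = 0}. If j ∈ V_1, set p = j - max([1,j] ∩ V_2) (which satisfies 1 ≤ p ≤ j-1 since 1 ∈ V_2). Then exp(A:1,j) = exp(A:1,j-p) + p. -/

import Mathlib

open Matrix BigOperators

/-- A nonnegative square matrix is primitive if some positive power has all entries positive. -/
def IsPrimitive {n : ℕ} (A : Matrix (Fin n) (Fin n) ℝ) : Prop :=
  ∃ m : ℕ, 0 < m ∧ ∀ i j, 0 < (A ^ m) i j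

/-- The exponent of a primitive matrix: the least positive `m` with `A ^ m > 0`. -/
noncomputable def matExp {n : ℕ} (A : Matrix (Fin n) (Fin n) ℝ) : ℕ :=
  sInf {m : ℕ | 0 < m ∧ ∀ i j, 0 < (A ^ m) i j}

/-- `(0,1)` companion matrix: superdiagonal ones on the first `n-1` rows,
arbitrary `(0,1)` last row, all other entries zero. -/
def IsCompanion {n : ℕ} (A : Matrix (Fin n) (Fin n) ℝ) : Prop :=
  (∀ i j, A i j = 0 ∨ A i j = 1) ∧
  (∀ i j : Fin n, (i : ℕ) + 1 < n → (A i j = 1 ↔ (j : ℕ) = (i : ℕ) + 1))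

/-- `exp(A:i,j)`: least positive `k` such that `(A^l) i j > 0` for all `l ≥ k`. -/
noncomputable def expIJ {n : ℕ} (A : Matrix (Fin n) (Fin n) ℝ) (i j : Fin n) : ℕ :=
  sInf {k : ℕ | 0 < k ∧ ∀ l, k ≤ l → 0 < (A ^ l) i j}

/-- `exp(A:i)`: least positive `p` such that every entry of row `i` of `A ^ p` is positive. -/
noncomputable def expRow {n : ℕ} (A : Matrix (Fin n) (Fin n) ℝ) (i : Fin n) : ℕ :=
  sInf {p : ℕ | 0 < p ∧ ∀ j, 0 < (A ^ p) i j}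

/-- The digraph of `A` has an elementary cycle of length `k`. -/
def HasElemCycle {n : ℕ} (A : Matrix (Fin n) (Fin n) ℝ) (k : ℕ) : Prop :=
  0 < k ∧ ∃ c : ℕ → Fin n, c k = c 0 ∧
    (∀ i j, i < k → j < k → c i = c j → i = j) ∧
    ∀ i < k, A (c i) (c (i + 1)) = 1

/-- `m(U)`: the maximal length of a run of consecutive integers contained in `U`. -/
noncomputable def runMax (U : Set ℕ) : ℕ :=
  sSup {k : ℕ | ∃ a : ℕ, ∀ t < k, a + t ∈ U}

/-- The Frobenius number of a set `L`: the least `N` such that every `m ≥ N` is a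
nonnegative integer combination of elements of `L`. -/
noncomputable def frobNum (L : Set ℕ) : ℕ :=
  sInf {N : ℕ | ∀ m, N ≤ m → m ∈ AddSubmonoid.closure L}

/-- Irreducibility: for all `i j` there is a walk of some positive length from `i` to `j`. -/
def IsIrreducibleMat {n : ℕ} (A : Matrix (Fin n) (Fin n) ℝ) : Prop :=
  ∀ i j, ∃ k : ℕ, 0 < k ∧ 0 < (A ^ k) i j

theorem stmt10 {n : ℕ} (hn : 3 ≤ n) (A : Matrix (Fin n) (Fin n) ℝ)
    (hA : IsCompanion A) (hP : _root_.IsPrimitive A)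
    (h1 : A ⟨n - 1, by omega⟩ ⟨0, by omega⟩ = 1)
    (htr : A ⟨n - 1, by omega⟩ ⟨n - 1, by omega⟩ = 0)
    (j q : Fin n) (hj : A ⟨n - 1, by omega⟩ j = 0)
    (hq1 : A ⟨n - 1, by omega⟩ q = 1) (hqj : q < j)
    (hqmax : ∀ r : Fin n, r ≤ j → A ⟨n - 1, by omega⟩ r = 1 → r ≤ q) :
    expIJ A ⟨0, by omega⟩ j = expIJ A ⟨0, by omega⟩ q + ((j : ℕ) - (q : ℕ)) := by
  obtain ⟨hA01, hAsup⟩ := hA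
  have hjn := j.isLt
  have hqn := q.isLt
  have hqj' : (q : ℕ) < (j : ℕ) := hqj
  set p : ℕ := (j : ℕ) - (q : ℕ) with hp
  -- entries of powers are nonnegative
  have hnn : ∀ l : ℕ, ∀ a b : Fin n, 0 ≤ (A ^ l) a b := by
    intro l
    induction l with
    | zero =>
      intro a b
      rw [pow_zero, Matrix.one_apply]
      split <;> norm_num
    | succ l ih =>
      intro a b
      rw [pow_succ, Matrix.mul_apply]
      apply Finset.sum_nonneg
      intro c _
      exact mul_nonneg (ih a c) (by rcases hA01 c b with h | h <;> simp [h])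
  -- one step of the unique-in-edge recursion
  have hstep : ∀ (r : Fin n), 0 < (r : ℕ) → A ⟨n - 1, by omega⟩ r = 0 → ∀ l : ℕ,
      (A ^ (l + 1)) ⟨0, by omega⟩ r
        = (A ^ l) ⟨0, by omega⟩ ⟨(r : ℕ) - 1, by have := r.isLt; omega⟩ := by
    intro r hr0 hr l
    rw [pow_succ, Matrix.mul_apply]
    rw [Finset.sum_eq_single (⟨(r : ℕ) - 1, by have := r.isLt; omega⟩ : Fin n)]
    · have hone : A (⟨(r : ℕ) - 1, by have := r.isLt; omega⟩ : Fin n) r = 1 := by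
        rw [hAsup _ _ (by show (r : ℕ) - 1 + 1 < n; have := r.isLt; omega)]
        show (r : ℕ) = (r : ℕ) - 1 + 1
        omega
      rw [hone, mul_one]
    · intro c _ hc
      have hz : A c r = 0 := by
        by_cases hcn : (c : ℕ) + 1 < n
        · rcases hA01 c r with h | h
          · exact h
          · exfalso
            have hval := (hAsup c r hcn).mp h
            exact hc (Fin.ext (by show (c : ℕ) = (r : ℕ) - 1; omega))
        · have hce : c = ⟨n - 1, by omega⟩ := Fin.ext (by have := c.isLt; show (c:ℕ) = n - 1; omega)
          rw [hce]; exact hr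
      rw [hz, mul_zero]
    · intro h; exact absurd (Finset.mem_univ _) h
  -- iterated recursion from j down to q
  have hiter : ∀ t : ℕ, t ≤ p → ∀ l : ℕ,
      (A ^ (l + t)) ⟨0, by omega⟩ j = (A ^ l) ⟨0, by omega⟩ ⟨(j : ℕ) - t, by omega⟩ := by
    intro t
    induction t with
    | zero =>
      intro _ l
      have hfe : (⟨(j : ℕ) - 0, by omega⟩ : Fin n) = j := Fin.ext (by show (j:ℕ) - 0 = (j:ℕ); omega)
      rw [hfe, Nat.add_zero]
    | succ t ih =>
      intro ht l
      have h1' := ih (by omega) (l + 1)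
      have hrV1 : A ⟨n - 1, by omega⟩ (⟨(j : ℕ) - t, by omega⟩ : Fin n) = 0 := by
        rcases hA01 ⟨n - 1, by omega⟩ ⟨(j : ℕ) - t, by omega⟩ with h | h
        · exact h
        · exfalso
          have hle := hqmax ⟨(j : ℕ) - t, by omega⟩ (by rw [Fin.le_def]; show (j:ℕ) - t ≤ (j:ℕ); omega) h
          rw [Fin.le_def] at hle
          have : (j : ℕ) - t ≤ (q : ℕ) := hle
          omega
      have hs := hstep ⟨(j : ℕ) - t, by omega⟩ (by show 0 < (j:ℕ) - t; omega) hrV1 l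
      have e1 : l + (t + 1) = l + 1 + t := by omega
      have hfe : (⟨(j : ℕ) - t - 1, by omega⟩ : Fin n) = ⟨(j : ℕ) - (t + 1), by omega⟩ :=
        Fin.ext (by show (j : ℕ) - t - 1 = (j : ℕ) - (t + 1); omega)
      rw [e1, h1', hs, hfe]
  have hpj : ∀ l : ℕ, (A ^ (l + p)) ⟨0, by omega⟩ j = (A ^ l) ⟨0, by omega⟩ q := by
    intro l
    have hfe : (⟨(j : ℕ) - p, by omega⟩ : Fin n) = q := Fin.ext (by show (j:ℕ) - p = (q:ℕ); omega)
    rw [hiter p le_rfl l, hfe]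
  -- primitivity gives eventual positivity
  obtain ⟨m, hm0, hmpos⟩ := hP
  have hup0 : ∀ k : ℕ, ∀ a b : Fin n, 0 < (A ^ (m + k)) a b := by
    intro k
    induction k with
    | zero => simpa using hmpos
    | succ k ih =>
      intro a b
      have hex : ∃ c : Fin n, A c b = 1 := by
        by_cases hb : (b : ℕ) = 0
        · refine ⟨⟨n - 1, by omega⟩, ?_⟩
          have : b = ⟨0, by omega⟩ := Fin.ext hb
          rw [this]; exact h1
        · refine ⟨⟨(b : ℕ) - 1, by have := b.isLt; omega⟩, ?_⟩
          rw [hAsup _ _ (by show (b:ℕ) - 1 + 1 < n; have := b.isLt; omega)]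
          show (b : ℕ) = (b : ℕ) - 1 + 1
          omega
      obtain ⟨c, hc⟩ := hex
      have e1 : m + (k + 1) = (m + k) + 1 := by omega
      rw [e1, pow_succ, Matrix.mul_apply]
      calc (0 : ℝ) < (A ^ (m + k)) a c * A c b := by
            rw [hc, mul_one]; exact ih a c
        _ ≤ ∑ x, (A ^ (m + k)) a x * A x b := by
            apply Finset.single_le_sum (f := fun x => (A ^ (m + k)) a x * A x b)
              (fun x _ => mul_nonneg (hnn (m + k) a x)
                (by rcases hA01 x b with h | h <;> simp [h]))
              (Finset.mem_univ c)
  have hup : ∀ l : ℕ, m ≤ l → ∀ a b : Fin n, 0 < (A ^ l) a b := by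
    intro l hl a b
    have := hup0 (l - m) a b
    rwa [show m + (l - m) = l by omega] at this
  -- the sets
  set Sq : Set ℕ := {k : ℕ | 0 < k ∧ ∀ l, k ≤ l → 0 < (A ^ l) ⟨0, by omega⟩ q} with hSq
  set Sj : Set ℕ := {k : ℕ | 0 < k ∧ ∀ l, k ≤ l → 0 < (A ^ l) ⟨0, by omega⟩ j} with hSj
  have hmSq : m ∈ Sq := ⟨hm0, fun l hl => hup l hl _ _⟩
  have heSq : sInf Sq ∈ Sq := Nat.sInf_mem ⟨m, hmSq⟩
  set e : ℕ := sInf Sq with he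
  -- any k in Sj satisfies p < k
  have hklow : ∀ k ∈ Sj, p < k := by
    intro k hk
    by_contra hkp
    push_neg at hkp
    by_cases hq0 : (q : ℕ) = 0
    · -- l = p + 1 gives (A^1) i0 q = A 0 0 = 0
      have hpos := hk.2 (1 + p) (by omega)
      rw [hpj 1, pow_one] at hpos
      have hq : q = (⟨0, by omega⟩ : Fin n) := Fin.ext hq0
      rw [hq] at hpos
      have : A (⟨0, by omega⟩ : Fin n) (⟨0, by omega⟩ : Fin n) = 0 := by
        rcases hA01 ⟨0, by omega⟩ ⟨0, by omega⟩ with h | h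
        · exact h
        · exfalso
          have := (hAsup ⟨0, by omega⟩ ⟨0, by omega⟩ (by show 0 + 1 < n; omega)).mp h
          simp at this
      rw [this] at hpos
      exact lt_irrefl 0 hpos
    · -- l = p gives (A^0) i0 q = 0
      have hpos := hk.2 (0 + p) (by omega)
      rw [hpj 0, pow_zero] at hpos
      rw [Matrix.one_apply_ne (by intro hh; exact hq0 (by rw [← hh]))] at hpos
      exact lt_irrefl 0 hpos
  have hmem : e + p ∈ Sj := by
    constructor
    · have := heSq.1; omega
    · intro l hl
      have h2 := hpj (l - p)
      rw [show l - p + p = l by omega] at h2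
      rw [h2]
      exact heSq.2 (l - p) (by omega)
  have hlb : ∀ k ∈ Sj, e + p ≤ k := by
    intro k hk
    have hpk := hklow k hk
    have hkq : k - p ∈ Sq := by
      constructor
      · omega
      · intro l hl
        have h2 := hpj l
        rw [← h2]
        exact hk.2 (l + p) (by omega)
    have := Nat.sInf_le hkq
    omega
  have hSjinf : sInf Sj = e + p := by
    apply le_antisymm
    · exact Nat.sInf_le hmem
    · exact hlb _ (Nat.sInf_mem ⟨e + p, hmem⟩)
  show sInf Sj = sInf Sq + p
  rw [hSjinf]
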